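/- Let g ≥ 2 and b > 1 be integers with gcd(b,g) = 1, let a be a positive integer with gcd(a,b) = 1 and a < b^k, let j ≥ 1, t ≥ 1 and k ≥ c_g(b). For m ≥ 1 define X_m = { ⌊a·g^i/b^m⌋ mod g^j : i ≥ j }, the set of list numbers of j-words occurring in the expansion of a/b^m. Then X_{k+t} = { ((s − n)·(b^t)^{−1}) mod g^j : s ∈ X_k, n ∈ {0,…,b^t−1} }, where (b^t)^{−1} denotes the multiplicative inverse of b^t modulo g^j (which exists since gcd(b,g)=1). -/

import Mathlib

/-- `ordg g m = min {n ≥ 1 : g^n ≡ 1 (mod m)}`, the multiplicative order of `g` modulo `m`. -/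
noncomputable def ordg (g m : ℕ) : ℕ := sInf {n : ℕ | 0 < n ∧ g ^ n ≡ 1 [MOD m]}

/-- `cg g b` is the least `c ≥ 1` such that `ord_g(b^{c+t}) = b^t·ord_g(b^c)` for all `t ≥ 1`. -/
noncomputable def cg (g b : ℕ) : ℕ :=
  sInf {c : ℕ | 0 < c ∧ ∀ t : ℕ, 0 < t → ordg g (b ^ (c + t)) = b ^ t * ordg g (b ^ c)}

lemma ordg_set_nonempty {g m : ℕ} (hm : 0 < m) (h : Nat.Coprime g m) :
    {n : ℕ | 0 < n ∧ g ^ n ≡ 1 [MOD m]}.Nonempty :=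
  ⟨m.totient, Nat.totient_pos.2 hm, Nat.ModEq.pow_totient h⟩

lemma ordg_mem {g m : ℕ} (hm : 0 < m) (h : Nat.Coprime g m) :
    0 < ordg g m ∧ g ^ ordg g m ≡ 1 [MOD m] :=
  Nat.sInf_mem (ordg_set_nonempty hm h)

lemma ordg_le {g m n : ℕ} (hn : 0 < n) (h : g ^ n ≡ 1 [MOD m]) : ordg g m ≤ n :=
  Nat.sInf_le ⟨hn, h⟩

lemma ordg_dvd {g m n : ℕ} (hm : 0 < m) (hgm : Nat.Coprime g m)
    (h : g ^ n ≡ 1 [MOD m]) : ordg g m ∣ n := by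
  obtain ⟨hO, hOmod⟩ := ordg_mem hm hgm
  set O := ordg g m with hOdef
  rcases Nat.eq_zero_or_pos (n % O) with hr | hr
  · exact Nat.dvd_of_mod_eq_zero hr
  · exfalso
    have hmod : g ^ (n % O) ≡ 1 [MOD m] := by
      have h1 : g ^ (O * (n / O)) ≡ 1 [MOD m] := by
        rw [pow_mul]
        simpa using hOmod.pow (n / O)
      have h2 : g ^ (O * (n / O) + n % O) ≡ 1 [MOD m] := by
        rw [Nat.mul_comm O (n/O), Nat.div_add_mod']
        exact h
      have h3 : g ^ (O * (n / O)) * g ^ (n % O) ≡ 1 * g ^ (n % O) [MOD m] :=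
        h1.mul_right _
      rw [← pow_add, one_mul] at h3
      exact (h3.symm.trans h2)
    have := ordg_le hr hmod
    have := Nat.mod_lt n hO
    omega

lemma ordg_dvd_iff {g m n : ℕ} (hm : 0 < m) (hgm : Nat.Coprime g m) :
    g ^ n ≡ 1 [MOD m] ↔ ordg g m ∣ n := by
  refine ⟨ordg_dvd hm hgm, ?_⟩
  rintro ⟨c, rfl⟩
  rw [pow_mul]
  simpa using ((ordg_mem hm hgm).2).pow c

lemma pow_sub_one_factor {A : ℕ} (hA : 1 ≤ A) (w : ℕ) :
    ∃ S : ℕ, A ^ w = (A - 1) * S + 1 ∧ (A % 2 = 1 → S % 2 = w % 2) := by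
  obtain ⟨B, rfl⟩ : ∃ B, A = B + 1 := ⟨A - 1, by omega⟩
  induction w with
  | zero => exact ⟨0, by simp, by simp⟩
  | succ w ih =>
    obtain ⟨S, hS, hpar⟩ := ih
    refine ⟨(B + 1) * S + 1, ?_, ?_⟩
    · calc (B+1) ^ (w+1) = (B+1) * (B+1)^w := by ring
        _ = (B+1) * ((B+1-1) * S + 1) := by rw [hS]
        _ = (B+1-1) * ((B+1) * S + 1) + 1 := by simp; ring
    · intro hodd
      have h1 := hpar hodd
      have h2 : (B+1) * S % 2 = S % 2 % 2 := by rw [Nat.mul_mod, hodd, one_mul]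
      omega

lemma lte2_odd {A : ℕ} (hA : 2 ≤ A) (hodd : A % 2 = 1) {w : ℕ} (hw : w % 2 = 1) :
    padicValNat 2 (A ^ w - 1) = padicValNat 2 (A - 1) := by
  obtain ⟨S, hS, hpar⟩ := pow_sub_one_factor (A := A) (by omega) w
  have hSo := hpar hodd
  have hS' : A ^ w - 1 = (A - 1) * S := by omega
  have hA0 : A - 1 ≠ 0 := by omega
  have hS0 : S ≠ 0 := by omega
  have hSv : padicValNat 2 S = 0 := padicValNat.eq_zero_of_not_dvd (by omega)
  rw [hS', padicValNat.mul hA0 hS0, hSv]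
  omega

lemma lte_val {A : ℕ} (hA : 2 ≤ A) {p : ℕ} (hp : p.Prime) (hpx : p ∣ A - 1)
    (h2 : p = 2 → 4 ∣ A - 1) {w : ℕ} (hw : 0 < w) :
    padicValNat p (A ^ w - 1) = padicValNat p (A - 1) + padicValNat p w := by
  haveI : Fact p.Prime := ⟨hp⟩
  rcases eq_or_ne p 2 with rfl | hpne
  · obtain ⟨c, hc⟩ := h2 rfl
    have hAodd : A % 2 = 1 := by omega
    rcases Nat.even_or_odd w with hwe | hwo
    · have hx2 : ¬ 2 ∣ A := by omega
      have key := padicValNat.pow_two_sub_pow (x := A) (y := 1) (by omega) (by simpa using hpx)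
        hx2 (n := w) (by omega) hwe
      simp only [one_pow] at key
      have hA1 : padicValNat 2 (A + 1) = 1 := by
        have hA1' : A + 1 = 2 * (2 * c + 1) := by omega
        have e1 : padicValNat 2 (2 * c + 1) = 0 := padicValNat.eq_zero_of_not_dvd (by omega)
        have e2 : padicValNat 2 2 = 1 := padicValNat.self one_lt_two
        rw [hA1', padicValNat.mul (by omega) (by omega), e1, e2]
      omega
    · have hwodd : w % 2 = 1 := Nat.odd_iff.1 hwo
      have hw0 : padicValNat 2 w = 0 := padicValNat.eq_zero_of_not_dvd (by omega)
      rw [lte2_odd hA hAodd hwodd, hw0]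
      omega
  · have hpodd : Odd p := hp.odd_of_ne_two hpne
    have hpA : ¬ p ∣ A := by
      intro hd
      have h1 : p ∣ A - (A - 1) := Nat.dvd_sub hd hpx
      have he : A - (A - 1) = 1 := by omega
      rw [he] at h1
      have := Nat.dvd_one.mp h1
      exact absurd this hp.one_lt.ne'
    have key := padicValNat.pow_sub_pow hpodd (x := A) (y := 1) (by omega) (by simpa using hpx)
      hpA (n := w) hw.ne'
    simpa using key

lemma dvd_pow_iff_forall {b m y : ℕ} (hb : 1 < b) (hy : y ≠ 0) :
    b ^ m ∣ y ↔ ∀ p : ℕ, p.Prime → p ∣ b → (b ^ m).factorization p ≤ y.factorization p := by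
  rw [← Nat.factorization_le_iff_dvd (pow_ne_zero m (by omega)) hy, Finsupp.le_def]
  constructor
  · intro h p _ _; exact h p
  · intro h p
    by_cases hp : p.Prime
    · by_cases hpb : p ∣ b
      · exact h p hp hpb
      · have : ¬ p ∣ b ^ m := fun hd => hpb (hp.dvd_of_dvd_pow hd)
        rw [Nat.factorization_eq_zero_of_not_dvd this]
        exact Nat.zero_le _
    · rw [Nat.factorization_eq_zero_of_not_prime _ hp]
      exact Nat.zero_le _

lemma char_dvd {g b N : ℕ} (hg : 2 ≤ g) (hb : 1 < b) (hN : 0 < N)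
    (hbx : b ^ 2 ∣ g ^ N - 1) {w : ℕ} (hw : 0 < w) (m : ℕ) :
    (b ^ m ∣ g ^ (N * w) - 1 ↔ b ^ m ∣ (g ^ N - 1) * w) := by
  have hA : 2 ≤ g ^ N := by
    calc 2 = 2 ^ 1 := rfl
    _ ≤ g ^ N := (Nat.pow_le_pow_left hg 1).trans (Nat.pow_le_pow_right (by omega) hN)
  have hx0 : g ^ N - 1 ≠ 0 := by omega
  have hAw : g ^ (N * w) - 1 ≠ 0 := by
    have : g ^ N ≤ g ^ (N * w) := Nat.pow_le_pow_right (by omega) (Nat.le_mul_of_pos_right N hw)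
    omega
  have hxw : (g ^ N - 1) * w ≠ 0 := Nat.mul_ne_zero hx0 hw.ne'
  have hval : ∀ p : ℕ, p.Prime → p ∣ b →
      (g ^ (N * w) - 1).factorization p = ((g ^ N - 1) * w).factorization p := by
    intro p hp hpb
    have hpx : p ∣ g ^ N - 1 := (hpb.trans (dvd_pow_self b two_ne_zero)).trans hbx
    have h2 : p = 2 → 4 ∣ g ^ N - 1 := by
      rintro rfl
      exact dvd_trans (by simpa using pow_dvd_pow_of_dvd hpb 2) hbx
    have heq : g ^ (N * w) - 1 = (g ^ N) ^ w - 1 := by rw [pow_mul]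
    rw [heq, Nat.factorization_mul hx0 hw.ne', Finsupp.add_apply,
      Nat.factorization_def _ hp, Nat.factorization_def _ hp, Nat.factorization_def _ hp]
    have := lte_val hA hp (by simpa using hpx) (by simpa using h2) hw
    simpa using this
  rw [dvd_pow_iff_forall hb hAw, dvd_pow_iff_forall hb hxw]
  exact forall_congr' fun p => imp_congr_right fun hp => imp_congr_right fun hpb =>
    by rw [hval p hp hpb]

lemma ordg_pow_eq {g b : ℕ} (hg : 2 ≤ g) (hb : 1 < b) (hgb : Nat.Coprime g b)
    {m : ℕ} (hm : 2 ≤ m) :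
    ordg g (b ^ m) = ordg g (b ^ 2) *
      (b ^ m / Nat.gcd (b ^ m) (g ^ ordg g (b ^ 2) - 1)) := by
  set N := ordg g (b ^ 2) with hNdef
  set x := g ^ N - 1 with hxdef
  have hb2 : 0 < b ^ 2 := by positivity
  have hbm : 0 < b ^ m := by positivity
  have hbm1 : 1 < b ^ m := Nat.one_lt_pow (by omega) hb
  have hcop2 : Nat.Coprime g (b ^ 2) := hgb.pow_right 2
  have hcopm : Nat.Coprime g (b ^ m) := hgb.pow_right m
  obtain ⟨hN, hNmod⟩ := ordg_mem hb2 hcop2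
  have hgN1 : 1 ≤ g ^ N := Nat.one_le_pow _ _ (by omega)
  have hbx : b ^ 2 ∣ x := (Nat.modEq_iff_dvd' hgN1).mp hNmod.symm
  set d := Nat.gcd (b ^ m) x with hddef
  have hd0 : 0 < d := Nat.gcd_pos_of_pos_left x hbm
  have hdbm : d ∣ b ^ m := Nat.gcd_dvd_left _ _
  have hdx : d ∣ x := Nat.gcd_dvd_right _ _
  set u := b ^ m / d with hudef
  have hu0 : 0 < u := Nat.div_pos (Nat.le_of_dvd hbm hdbm) hd0
  have hdu : d * u = b ^ m := Nat.mul_div_cancel' hdbm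
  -- membership : g ^ (N * u) ≡ 1 [MOD b ^ m]
  have hdvd : b ^ m ∣ x * u := by
    obtain ⟨x', hx'⟩ := hdx
    refine ⟨x', ?_⟩
    rw [hx', ← hdu]; ring
  have hmem : g ^ (N * u) ≡ 1 [MOD b ^ m] := by
    have h1 : b ^ m ∣ g ^ (N * u) - 1 := (char_dvd hg hb hN hbx hu0 m).mpr hdvd
    have h2 : 1 ≤ g ^ (N * u) := Nat.one_le_pow _ _ (by omega)
    exact ((Nat.modEq_iff_dvd' h2).mpr h1).symm
  refine le_antisymm (ordg_le (by positivity) hmem) ?_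
  obtain ⟨hO, hOmod⟩ := ordg_mem hbm hcopm
  set O := ordg g (b ^ m) with hOdef
  have hO2 : g ^ O ≡ 1 [MOD b ^ 2] :=
    hOmod.of_dvd (pow_dvd_pow b hm)
  obtain ⟨w, hw⟩ := ordg_dvd hb2 hcop2 hO2
  have hw0 : 0 < w := by
    rcases Nat.eq_zero_or_pos w with h | h
    · exfalso; rw [h, mul_zero] at hw; omega
    · exact h
  have hOdvd : b ^ m ∣ x * w := by
    have h1 : 1 ≤ g ^ (N * w) := Nat.one_le_pow _ _ (by omega)
    have h2 : b ^ m ∣ g ^ (N * w) - 1 := (Nat.modEq_iff_dvd' h1).mp (hw ▸ hOmod).symm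
    exact (char_dvd hg hb hN hbx hw0 m).mp h2
  -- u ∣ w
  have hcop_u : Nat.Coprime u (x / d) := by
    have := Nat.coprime_div_gcd_div_gcd (m := b ^ m) (n := x) hd0
    exact this
  have huw : u ∣ w := by
    have h1 : d * u ∣ d * (x / d * w) := by
      rw [hdu]
      obtain ⟨x', hx'⟩ := hdx
      have : d * (x / d * w) = x * w := by
        rw [hx', Nat.mul_div_cancel_left _ hd0]; ring
      rw [this]
      exact hOdvd
    have h2 : u ∣ x / d * w := (mul_dvd_mul_iff_left hd0.ne').mp h1
    exact Nat.Coprime.dvd_of_dvd_mul_left hcop_u h2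
  calc N * u ≤ N * w := Nat.mul_le_mul_left N (Nat.le_of_dvd hw0 huw)
  _ = O := hw.symm

lemma gcd_pow_stable {b x c m : ℕ} (hb : 1 < b) (hx : 0 < x) (hc : x < 2 ^ c) (hm : c ≤ m) :
    Nat.gcd (b ^ m) x = Nat.gcd (b ^ c) x := by
  apply Nat.dvd_antisymm
  · -- gcd (b^m) x ∣ gcd (b^c) x
    apply Nat.dvd_gcd _ (Nat.gcd_dvd_right _ _)
    set d := Nat.gcd (b ^ m) x with hd
    have hd0 : d ≠ 0 := (Nat.gcd_pos_of_pos_right _ hx).ne'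
    rw [← Nat.factorization_le_iff_dvd hd0 (pow_ne_zero c (by omega)), Finsupp.le_def]
    intro p
    by_cases hp : p.Prime
    · have hdx : d ∣ x := Nat.gcd_dvd_right _ _
      have h1 : d.factorization p ≤ x.factorization p :=
        (Nat.factorization_le_iff_dvd hd0 hx.ne').mpr hdx p
      by_cases hpb : p ∣ b
      · have hvb : 1 ≤ b.factorization p := by
          have := (Nat.Prime.factorization_pos_of_dvd hp (by omega) hpb)
          omega
        have hvx : x.factorization p ≤ c := by
          have h2 : p ^ x.factorization p ∣ x := Nat.ordProj_dvd x p
          have h3 : p ^ x.factorization p ≤ x := Nat.le_of_dvd hx h2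
          have h4 : 2 ^ x.factorization p ≤ p ^ x.factorization p :=
            Nat.pow_le_pow_left hp.two_le _
          have h5 : 2 ^ x.factorization p < 2 ^ c := by omega
          exact le_of_lt ((Nat.pow_lt_pow_iff_right (by omega)).mp h5)
        have hvc : (b ^ c).factorization p = c * b.factorization p := by
          rw [Nat.factorization_pow]; simp
        calc d.factorization p ≤ x.factorization p := h1
          _ ≤ c := hvx
          _ ≤ c * b.factorization p := by nlinarith
          _ = (b ^ c).factorization p := hvc.symm
      · have : ¬ p ∣ d := by
          intro hpd
          have : p ∣ b ^ m := hpd.trans (Nat.gcd_dvd_left _ _)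
          exact hpb (hp.dvd_of_dvd_pow this)
        rw [Nat.factorization_eq_zero_of_not_dvd this]
        exact Nat.zero_le _
    · rw [Nat.factorization_eq_zero_of_not_prime _ hp]
      exact Nat.zero_le _
  · exact Nat.dvd_gcd ((Nat.gcd_dvd_left _ _).trans (pow_dvd_pow b hm)) (Nat.gcd_dvd_right _ _)

lemma cg_spec {g b : ℕ} (hg : 2 ≤ g) (hb : 1 < b) (hgb : Nat.Coprime g b) :
    0 < cg g b ∧ ∀ t : ℕ, 0 < t → ordg g (b ^ (cg g b + t)) = b ^ t * ordg g (b ^ cg g b) := by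
  have hb2 : 0 < b ^ 2 := by positivity
  set N := ordg g (b ^ 2) with hNdef
  set x := g ^ N - 1 with hxdef
  obtain ⟨hN, hNmod⟩ := ordg_mem hb2 (hgb.pow_right 2)
  have hgN : 2 ≤ g ^ N := by
    calc 2 = 2 ^ 1 := rfl
    _ ≤ g ^ N := (Nat.pow_le_pow_left hg 1).trans (Nat.pow_le_pow_right (by omega) hN)
  have hx0 : 0 < x := by omega
  set c := x + 2 with hcdef
  have hxc : x < 2 ^ c := by
    have := Nat.lt_two_pow_self (n := x)
    have : (2:ℕ) ^ x ≤ 2 ^ c := Nat.pow_le_pow_right (by omega) (by omega)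
    omega
  have hstab : ∀ m : ℕ, c ≤ m → Nat.gcd (b ^ m) x = Nat.gcd (b ^ c) x :=
    fun m hm => gcd_pow_stable hb hx0 hxc hm
  set D := Nat.gcd (b ^ c) x with hDdef
  have hDc : D ∣ b ^ c := Nat.gcd_dvd_left _ _
  have hmemc : ∀ t : ℕ, 0 < t → ordg g (b ^ (c + t)) = b ^ t * ordg g (b ^ c) := by
    intro t ht
    have h1 : ordg g (b ^ (c + t)) = N * (b ^ (c + t) / D) := by
      rw [ordg_pow_eq hg hb hgb (by omega), ← hNdef, ← hxdef, hstab (c + t) (by omega)]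
    have h2 : ordg g (b ^ c) = N * (b ^ c / D) := by
      rw [ordg_pow_eq hg hb hgb (by omega), ← hNdef, ← hxdef, hstab c le_rfl]
    rw [h1, h2]
    have h3 : b ^ (c + t) = b ^ t * b ^ c := by rw [← pow_add, Nat.add_comm]
    rw [h3, Nat.mul_div_assoc (b ^ t) hDc]
    ring
  have hne : {c' : ℕ | 0 < c' ∧ ∀ t : ℕ, 0 < t →
      ordg g (b ^ (c' + t)) = b ^ t * ordg g (b ^ c')}.Nonempty :=
    ⟨c, by omega, hmemc⟩
  exact Nat.sInf_mem hne

lemma ordg_key {g b : ℕ} (hg : 2 ≤ g) (hb : 1 < b) (hgb : Nat.Coprime g b)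
    {k t : ℕ} (hk : cg g b ≤ k) (ht : 0 < t) :
    ordg g (b ^ (k + t)) = b ^ t * ordg g (b ^ k) := by
  obtain ⟨hc0, hc⟩ := cg_spec hg hb hgb
  obtain ⟨s, rfl⟩ : ∃ s, k = cg g b + s := ⟨k - cg g b, by omega⟩
  rcases Nat.eq_zero_or_pos s with rfl | hs
  · simpa using hc t ht
  · have h1 : ordg g (b ^ (cg g b + s + t)) = b ^ (s + t) * ordg g (b ^ cg g b) := by
      rw [add_assoc]; exact hc (s + t) (by omega)
    rw [h1, hc s hs, pow_add]
    ring

/-- For `j, t ≥ 1` and `k ≥ c_g(b)`, the set `X_{k+t}` of list numbers of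
`j`-words occurring in the expansion of `a/b^{k+t}` (viewed in `ZMod (g^j)`) equals
`{ (s − n)·(b^t)⁻¹ mod g^j : s ∈ X_k, n ∈ {0,…,b^t−1} }`, where `(b^t)⁻¹` is the
multiplicative inverse of `b^t` modulo `g^j`. -/
theorem words_next_level (g b a j t k : ℕ) (hg : 2 ≤ g) (hb : 1 < b)
    (hbg : Nat.gcd b g = 1) (ha : 0 < a) (hab : Nat.gcd a b = 1) (hak : a < b ^ k)
    (hj : 1 ≤ j) (ht : 1 ≤ t) (hk : cg g b ≤ k) :
    {x : ZMod (g ^ j) | ∃ i : ℕ, j ≤ i ∧ x = ((a * g ^ i / b ^ (k + t) : ℕ) : ZMod (g ^ j))}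
      = {x : ZMod (g ^ j) |
          ∃ s : ZMod (g ^ j),
            (∃ i : ℕ, j ≤ i ∧ s = ((a * g ^ i / b ^ k : ℕ) : ZMod (g ^ j))) ∧
            ∃ n : ℕ, n < b ^ t ∧
              x = (s - (n : ZMod (g ^ j))) * ((b ^ t : ℕ) : ZMod (g ^ j))⁻¹} := by
  haveI : NeZero (g ^ j) := ⟨pow_ne_zero j (by omega)⟩
  have hbgc : Nat.Coprime b g := hbg
  have hgb : Nat.Coprime g b := hbgc.symm
  have habc : Nat.Coprime a b := hab
  have hunit : ∀ s : ℕ, IsUnit ((b ^ s : ℕ) : ZMod (g ^ j)) := fun s =>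
    (ZMod.isUnit_iff_coprime _ _).mpr (hbgc.pow _ _)
  have hcast0 : ∀ i : ℕ, j ≤ i → ((a * g ^ i : ℕ) : ZMod (g ^ j)) = 0 := by
    intro i hi
    rw [ZMod.natCast_eq_zero_iff]
    exact Dvd.dvd.mul_left (pow_dvd_pow g hi) a
  have hkey : ∀ (m i : ℕ), j ≤ i →
      ((a * g ^ i / m : ℕ) : ZMod (g ^ j)) * ((m : ℕ) : ZMod (g ^ j))
        = -((a * g ^ i % m : ℕ) : ZMod (g ^ j)) := by
    intro m i hi
    have h := Nat.div_add_mod (a * g ^ i) m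
    have h2 : ((m * (a * g ^ i / m) + a * g ^ i % m : ℕ) : ZMod (g ^ j)) = 0 := by
      rw [h]; exact hcast0 i hi
    push_cast at h2
    linear_combination h2
  have hk0 : 0 < k := lt_of_lt_of_le (cg_spec (by omega) hb hgb).1 hk
  ext x
  simp only [Set.mem_setOf_eq]
  constructor
  · rintro ⟨i, hij, rfl⟩
    refine ⟨((a * g ^ i / b ^ k : ℕ) : ZMod (g ^ j)), ⟨i, hij, rfl⟩,
      a * g ^ i % b ^ (k + t) / b ^ k, ?_, ?_⟩
    · have h1 : a * g ^ i % b ^ (k + t) < b ^ (k + t) := Nat.mod_lt _ (by positivity)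
      have h2 : b ^ (k + t) = b ^ k * b ^ t := pow_add b k t
      exact Nat.div_lt_of_lt_mul (by omega)
    · have hident : a * g ^ i / b ^ k
          = b ^ t * (a * g ^ i / b ^ (k + t)) + a * g ^ i % b ^ (k + t) / b ^ k := by
        have e1 : a * g ^ i / b ^ (k + t) = a * g ^ i / b ^ k / b ^ t := by
          rw [Nat.div_div_eq_div_mul, ← pow_add]
        have e2 : a * g ^ i % b ^ (k + t) / b ^ k = a * g ^ i / b ^ k % b ^ t := by
          rw [show b ^ (k + t) = b ^ k * b ^ t from pow_add b k t]
          exact Nat.mod_mul_right_div_self _ _ _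
        rw [e1, e2]
        exact (Nat.div_add_mod _ _).symm
      have hc : ((a * g ^ i / b ^ k : ℕ) : ZMod (g ^ j))
          = ((b ^ t : ℕ) : ZMod (g ^ j)) * ((a * g ^ i / b ^ (k + t) : ℕ) : ZMod (g ^ j))
            + ((a * g ^ i % b ^ (k + t) / b ^ k : ℕ) : ZMod (g ^ j)) := by
        rw [← Nat.cast_mul, ← Nat.cast_add, ← hident]
      rw [hc]
      have hbt : ((b ^ t : ℕ) : ZMod (g ^ j)) * ((b ^ t : ℕ) : ZMod (g ^ j))⁻¹ = 1 :=
        ZMod.mul_inv_of_unit _ (hunit t)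
      rw [add_sub_cancel_right]
      linear_combination (-((a * g ^ i / b ^ (k + t) : ℕ) : ZMod (g ^ j))) * hbt
  · rintro ⟨s, ⟨i, hij, rfl⟩, n, hn, rfl⟩
    have hbk1 : 1 < b ^ k := Nat.one_lt_pow (by omega) hb
    have hcopk : Nat.Coprime g (b ^ k) := hgb.pow_right k
    obtain ⟨hO, hOmod⟩ := ordg_mem (by omega) hcopk
    set O := ordg g (b ^ k) with hOdef
    have hord : ordg g (b ^ (k + t)) = b ^ t * O := ordg_key (by omega) hb hgb hk (by omega)
    set f : ℕ → ℕ := fun m => a * g ^ (i + m * O) % b ^ (k + t) / b ^ k with hfdef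
    have hbkt0 : 0 < b ^ (k + t) := by positivity
    have hflt : ∀ m, f m < b ^ t := by
      intro m
      apply Nat.div_lt_of_lt_mul
      calc a * g ^ (i + m * O) % b ^ (k + t) < b ^ (k + t) := Nat.mod_lt _ hbkt0
      _ = b ^ k * b ^ t := pow_add b k t
    have hfr : ∀ m, a * g ^ (i + m * O) % b ^ (k + t) = b ^ k * f m + a * g ^ i % b ^ k := by
      intro m
      have h1 : a * g ^ (i + m * O) % b ^ (k + t) % b ^ k = a * g ^ (i + m * O) % b ^ k :=
        Nat.mod_mod_of_dvd _ (pow_dvd_pow b (by omega))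
      have h2 : a * g ^ (i + m * O) % b ^ k = a * g ^ i % b ^ k := by
        have h3 : g ^ (O * m) ≡ 1 [MOD b ^ k] := by
          rw [pow_mul]
          simpa using hOmod.pow m
        have h4 : a * g ^ i * g ^ (O * m) ≡ a * g ^ i * 1 [MOD b ^ k] :=
          Nat.ModEq.mul_left _ h3
        have h5 : a * g ^ (i + m * O) = a * g ^ i * g ^ (O * m) := by
          rw [mul_assoc, ← pow_add]
          ring_nf
        rw [h5]
        simpa [Nat.ModEq] using h4
      have h6 := Nat.div_add_mod (a * g ^ (i + m * O) % b ^ (k + t)) (b ^ k)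
      rw [h1, h2] at h6
      simp only [hfdef]
      omega
    have hinj : ∀ m1 m2 : ℕ, m1 ≤ m2 → m2 < b ^ t → f m1 = f m2 → m1 = m2 := by
      intro m1 m2 hle hlt hf
      by_contra hne
      have hd : 0 < m2 - m1 := by omega
      have e1 : a * g ^ (i + m2 * O) % b ^ (k + t) = a * g ^ (i + m1 * O) % b ^ (k + t) := by
        rw [hfr m1, hfr m2, hf]
      have e2 : a * g ^ (i + m1 * O) * g ^ ((m2 - m1) * O) = a * g ^ (i + m2 * O) := by
        rw [mul_assoc, ← pow_add]
        congr 2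
        have hmul : m1 * O ≤ m2 * O := Nat.mul_le_mul_right _ hle
        rw [Nat.sub_mul]
        omega
      have e3 : a * g ^ (i + m1 * O) * g ^ ((m2 - m1) * O)
          ≡ a * g ^ (i + m1 * O) * 1 [MOD b ^ (k + t)] := by
        rw [e2, mul_one]
        exact e1
      have hcop : Nat.Coprime (a * g ^ (i + m1 * O)) (b ^ (k + t)) :=
        Nat.Coprime.mul (habc.pow_right _) (hgb.pow _ _)
      have e4 : g ^ ((m2 - m1) * O) ≡ 1 [MOD b ^ (k + t)] :=
        Nat.ModEq.cancel_left_of_coprime hcop.symm e3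
      have e5 : ordg g (b ^ (k + t)) ∣ (m2 - m1) * O :=
        ordg_dvd (by positivity) (hgb.pow_right _) e4
      rw [hord] at e5
      obtain ⟨q, hq⟩ := e5
      have e6 : m2 - m1 = b ^ t * q := by
        have : (m2 - m1) * O = b ^ t * q * O := by rw [hq]; ring
        exact Nat.eq_of_mul_eq_mul_right hO this
      have hbt1 : 0 < b ^ t := by positivity
      rcases Nat.eq_zero_or_pos q with rfl | hq0
      · omega
      · have : b ^ t * 1 ≤ b ^ t * q := Nat.mul_le_mul_left _ hq0
        omega
    have hsurj : ∃ m, m < b ^ t ∧ f m = n := by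
      have hbt0 : 0 < b ^ t := by positivity
      set F : Fin (b ^ t) → Fin (b ^ t) := fun m => ⟨f m.1, hflt m.1⟩ with hF
      have hFinj : Function.Injective F := by
        intro m1 m2 h
        have hfeq : f m1.1 = f m2.1 := congrArg Fin.val h
        rcases le_total m1.1 m2.1 with hle | hle
        · exact Fin.ext (hinj _ _ hle m2.2 hfeq)
        · exact (Fin.ext (hinj _ _ hle m1.2 hfeq.symm)).symm
      have hFsurj : Function.Surjective F := Finite.surjective_of_injective hFinj
      obtain ⟨m, hm⟩ := hFsurj ⟨n, hn⟩
      exact ⟨m.1, m.2, congrArg Fin.val hm⟩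
    obtain ⟨m, hmlt, hfm⟩ := hsurj
    refine ⟨i + m * O, by omega, ?_⟩
    have h1 := hkey (b ^ (k + t)) (i + m * O) (by omega)
    have h2 := hkey (b ^ k) i hij
    rw [hfr m, hfm] at h1
    have hinv : ((b ^ t : ℕ) : ZMod (g ^ j))⁻¹ * ((b ^ t : ℕ) : ZMod (g ^ j)) = 1 :=
      ZMod.inv_mul_of_unit _ (hunit t)
    have hu2 : IsUnit (((b : ℕ) : ZMod (g ^ j)) ^ (k + t)) := by
      have := hunit (k + t); push_cast at this; exact this
    push_cast at h1 h2 hinv ⊢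
    apply hu2.mul_right_cancel
    linear_combination ((((a * g ^ i / b ^ k : ℕ) : ZMod (g ^ j)) - (n : ZMod (g ^ j)))
      * ((b : ℕ) : ZMod (g ^ j)) ^ k) * hinv - h1 + h2
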